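/- For ω ∈ ℝ³ with θ = ‖ω‖, the matrix exponential of ⋆(ω) is given by the Rodrigues formula: exp(⋆(ω)) = I + sinc(θ) ⋆(ω) + (1/2) (sinc(θ/2))² ⋆(ω)², where sinc(x) = sin(x)/x for x ≠ 0 and sinc(0) = 1. -/

import Mathlib

open Matrix
open scoped Nat

def hat (ω : Fin 3 → ℝ) : Matrix (Fin 3) (Fin 3) ℝ :=
  !![0, -ω 2, ω 1; ω 2, 0, -ω 0; -ω 1, ω 0, 0]

noncomputable def sinc (x : ℝ) : ℝ := if x = 0 then 1 else Real.sin x / x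

lemma hat_cube (ω : Fin 3 → ℝ) :
    hat ω * hat ω * hat ω = (-(ω ⬝ᵥ ω)) • hat ω := by
  ext i j
  fin_cases i <;> fin_cases j <;>
    simp [hat, Matrix.mul_apply, dotProduct, Fin.sum_univ_three] <;> ring

lemma hat_pow_odd (ω : Fin 3 → ℝ) (c : ℝ) (hc : ω ⬝ᵥ ω = c) (n : ℕ) :
    hat ω ^ (2 * n + 1) = ((-c) ^ n) • hat ω := by
  induction n with
  | zero => simp
  | succ n ih =>
      have h3 : hat ω ^ 3 = (-c) • hat ω := by
        rw [pow_succ, pow_two, hat_cube, hc]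
      calc hat ω ^ (2 * (n + 1) + 1) = hat ω ^ (2 * n + 1) * hat ω ^ 2 := by
            rw [← pow_add]; ring_nf
        _ = ((-c) ^ n) • (hat ω * hat ω ^ 2) := by rw [ih, smul_mul_assoc]
        _ = ((-c) ^ n) • ((-c) • hat ω) := by rw [← pow_succ', h3]
        _ = ((-c) ^ (n + 1)) • hat ω := by rw [smul_smul, ← pow_succ]

lemma hat_pow_even (ω : Fin 3 → ℝ) (c : ℝ) (hc : ω ⬝ᵥ ω = c) (n : ℕ) :
    hat ω ^ (2 * n + 2) = ((-c) ^ n) • (hat ω * hat ω) := by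
  calc hat ω ^ (2 * n + 2) = hat ω ^ (2 * n + 1) * hat ω := by rw [← pow_succ]
    _ = ((-c) ^ n) • (hat ω * hat ω) := by rw [hat_pow_odd ω c hc, smul_mul_assoc]

theorem stmt13 (ω : Fin 3 → ℝ) (θ : ℝ) (hθ : θ = Real.sqrt (ω ⬝ᵥ ω)) :
    NormedSpace.exp (hat ω)
      = 1 + sinc θ • hat ω + ((1 / 2) * (sinc (θ / 2)) ^ 2) • (hat ω * hat ω) := by
  have hc0 : 0 ≤ ω ⬝ᵥ ω := by
    simp only [dotProduct, Fin.sum_univ_three]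
    nlinarith [mul_self_nonneg (ω 0), mul_self_nonneg (ω 1), mul_self_nonneg (ω 2)]
  by_cases hz : ω ⬝ᵥ ω = 0
  · have h : ω 0 * ω 0 + ω 1 * ω 1 + ω 2 * ω 2 = 0 := by
      simpa [dotProduct, Fin.sum_univ_three] using hz
    have h0 : ω 0 = 0 := by nlinarith [mul_self_nonneg (ω 0), mul_self_nonneg (ω 1), mul_self_nonneg (ω 2)]
    have h1 : ω 1 = 0 := by nlinarith [mul_self_nonneg (ω 0), mul_self_nonneg (ω 1), mul_self_nonneg (ω 2)]
    have h2 : ω 2 = 0 := by nlinarith [mul_self_nonneg (ω 0), mul_self_nonneg (ω 1), mul_self_nonneg (ω 2)]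
    have hhat : hat ω = 0 := by
      ext i j
      fin_cases i <;> fin_cases j <;>
        simp [hat, h0, h1, h2, Matrix.vecHead, Matrix.vecTail]
    rw [hhat, NormedSpace.exp_zero]
    simp
  · have hcpos : 0 < ω ⬝ᵥ ω := lt_of_le_of_ne hc0 (Ne.symm hz)
    have hθpos : 0 < θ := hθ ▸ Real.sqrt_pos.mpr hcpos
    have hθne : θ ≠ 0 := ne_of_gt hθpos
    have hθ2 : ω ⬝ᵥ ω = θ ^ 2 := by
      rw [hθ, Real.sq_sqrt hc0]
    set K : ℝ := (1 / 2 : ℝ) * (sinc (θ / 2)) ^ 2 with hKdef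
    have hsinc : sinc θ = Real.sin θ / θ := by rw [sinc, if_neg hθne]
    have hK : K = (1 - Real.cos θ) / θ ^ 2 := by
      have h2 : (θ / 2 : ℝ) ≠ 0 := by positivity
      have hhalf : Real.sin (θ / 2) ^ 2 = 1 / 2 - Real.cos (2 * (θ / 2)) / 2 :=
        Real.sin_sq_eq_half_sub _
      rw [hKdef, sinc, if_neg h2]
      rw [show (2 : ℝ) * (θ / 2) = θ by ring] at hhalf
      field_simp
      nlinarith [hhalf]
    -- scalar series for sinc θ
    have hs : HasSum (fun n : ℕ => ((-1 : ℝ) ^ n * θ ^ (2 * n) / (2 * n + 1)!)) (sinc θ) := by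
      have h := (Real.hasSum_sin θ).div_const θ
      rw [← hsinc] at h
      convert h using 2 with n
      · rfl
      rw [pow_succ]
      field_simp
    -- scalar series for K
    have hcosS : HasSum (fun n : ℕ => ((-1 : ℝ) ^ n * θ ^ (2 * n) / (2 * n)!)) (Real.cos θ) :=
      Real.hasSum_cos θ
    have h1 : HasSum (fun n : ℕ =>
        ((-1 : ℝ) ^ (n + 1) * θ ^ (2 * (n + 1)) / (2 * (n + 1))!)) (Real.cos θ - 1) := by
      refine (hasSum_nat_add_iff
        (f := fun n : ℕ => ((-1 : ℝ) ^ n * θ ^ (2 * n) / (2 * n)!)) 1).2 ?_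
      simpa using hcosS
    have he : HasSum (fun n : ℕ => ((-1 : ℝ) ^ n * θ ^ (2 * n) / (2 * n + 2)!)) K := by
      have h := h1.div_const (-θ ^ 2)
      have hv : (Real.cos θ - 1) / (-θ ^ 2) = K := by
        rw [hK]; field_simp; ring
      rw [hv] at h
      convert h using 2 with n
      · rfl
      have : 2 * (n + 1) = 2 * n + 2 := by ring
      rw [this, pow_succ (-1 : ℝ), pow_add]
      field_simp
    -- matrix series
    set A := hat ω with hA
    have hodd : HasSum (fun n : ℕ => ((2 * n + 1)!⁻¹ : ℝ) • A ^ (2 * n + 1)) (sinc θ • A) := by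
      have h := hs.smul_const A
      convert h using 2 with n
      rw [hat_pow_odd ω (θ ^ 2) hθ2, smul_smul]
      congr 1
      rw [neg_pow, ← pow_mul]
      field_simp
    have heven' : HasSum (fun n : ℕ => (((2 * (n + 1))!⁻¹ : ℝ)) • A ^ (2 * (n + 1)))
        (K • (A * A)) := by
      have h := he.smul_const (A * A)
      convert h using 2 with n
      have h2 : 2 * (n + 1) = 2 * n + 2 := by ring
      rw [h2, hat_pow_even ω (θ ^ 2) hθ2, smul_smul]
      congr 1
      rw [neg_pow, ← pow_mul]
      field_simp
    have heven : HasSum (fun n : ℕ => (((2 * n)!⁻¹ : ℝ)) • A ^ (2 * n)) (K • (A * A) + 1) := by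
      have h := (hasSum_nat_add_iff
        (f := fun n : ℕ => (((2 * n)!⁻¹ : ℝ)) • A ^ (2 * n)) 1).1 heven'
      simpa using h
    have hsum : HasSum (fun n : ℕ => ((n)!⁻¹ : ℝ) • A ^ n)
        ((K • (A * A) + 1) + sinc θ • A) := HasSum.even_add_odd heven hodd
    rw [NormedSpace.exp_eq_tsum ℝ]
    exact hsum.tsum_eq.trans (by abel)
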